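/- Let (X,τ,d) be a pre-e.pm.t. space such that (X,τ) is compact. Then there exist a compact extended metric-topological space (X̌,τ̌,ď) (i.e. with (X̌,τ̌) compact) and a surjective continuous-short map c : (X,τ,d) → (X̌,τ̌,ď) such that for every extended metric-topological space (Y,τ_Y,d_Y) and every continuous-short map φ : (X,τ,d) → (Y,τ_Y,d_Y) there exists a unique continuous-short map φ̃ : (X̌,τ̌,ď) → (Y,τ_Y,d_Y) with φ̃ ∘ c = φ; moreover τ̌ is the quotient topology of τ under c. -/

import Mathlib

open scoped ENNReal

universe u v w

/-- An extended pseudodistance on `X`. -/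
structure IsExtPseudoDist {X : Type*} (d : X → X → ℝ≥0∞) : Prop where
  refl : ∀ x, d x x = 0
  symm : ∀ x y, d x y = d y x
  triangle : ∀ x y z, d x y ≤ d x z + d z y

/-- An extended distance on `X`. -/
structure IsExtDist {X : Type*} (d : X → X → ℝ≥0∞) : Prop where
  eq_zero_iff : ∀ x y, d x y = 0 ↔ x = y
  symm : ∀ x y, d x y = d y x
  triangle : ∀ x y z, d x y ≤ d x z + d z y

/-- `LIP_{b,1}(X,τ,d)`: bounded `τ`-continuous functions `f : X → ℝ` with
`|f x - f y| ≤ d x y`. -/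
def Lip1 {X : Type*} (τ : TopologicalSpace X) (d : X → X → ℝ≥0∞) : Set (X → ℝ) :=
  {f | @Continuous X ℝ τ _ f ∧ (∃ C : ℝ, ∀ x, |f x| ≤ C) ∧
    ∀ x y, ENNReal.ofReal |f x - f y| ≤ d x y}

/-- `(X,τ,d)` is an extended metric-topological space. -/
def IsEMT {X : Type*} (τ : TopologicalSpace X) (d : X → X → ℝ≥0∞) : Prop :=
  IsExtDist d ∧
  τ = (⨅ f ∈ Lip1 τ d, TopologicalSpace.induced f inferInstance) ∧
  (∀ x y, d x y = ⨆ f ∈ Lip1 τ d, ENNReal.ofReal |f x - f y|)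

/-- A continuous-short map between (pre-)extended (pseudo)metric-topological spaces. -/
def ContinuousShort {X Y : Type*} (τX : TopologicalSpace X) (dX : X → X → ℝ≥0∞)
    (τY : TopologicalSpace Y) (dY : Y → Y → ℝ≥0∞) (φ : X → Y) : Prop :=
  @Continuous X Y τX τY φ ∧ ∀ x y, dY (φ x) (φ y) ≤ dX x y

/-! ### Auxiliary material for the proof -/

section AuxEMT

variable {X : Type u} (τ : TopologicalSpace X) (d : X → X → ℝ≥0∞)

noncomputable def deltaF (x y : X) : ℝ≥0∞ :=
  ⨆ f ∈ Lip1 τ d, ENNReal.ofReal |f x - f y|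

lemma deltaF_le (x y : X) : deltaF τ d x y ≤ d x y :=
  iSup₂_le fun _ hf => hf.2.2 x y

lemma le_deltaF {f : X → ℝ} (hf : f ∈ Lip1 τ d) (x y : X) :
    ENNReal.ofReal |f x - f y| ≤ deltaF τ d x y :=
  le_iSup₂ (f := fun f (_ : f ∈ Lip1 τ d) => ENNReal.ofReal |f x - f y|) f hf

lemma deltaF_symm (x y : X) : deltaF τ d x y = deltaF τ d y x := by
  unfold deltaF; simp_rw [abs_sub_comm]

lemma deltaF_triangle (x y z : X) :
    deltaF τ d x y ≤ deltaF τ d x z + deltaF τ d z y := by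
  refine iSup₂_le fun f hf => ?_
  calc ENNReal.ofReal |f x - f y|
      ≤ ENNReal.ofReal (|f x - f z| + |f z - f y|) :=
        ENNReal.ofReal_le_ofReal (abs_sub_le _ _ _)
    _ = ENNReal.ofReal |f x - f z| + ENNReal.ofReal |f z - f y| :=
        ENNReal.ofReal_add (abs_nonneg _) (abs_nonneg _)
    _ ≤ deltaF τ d x z + deltaF τ d z y :=
        add_le_add (le_deltaF τ d hf x z) (le_deltaF τ d hf z y)

lemma deltaF_eq_zero_iff (x y : X) :
    deltaF τ d x y = 0 ↔ ∀ f ∈ Lip1 τ d, f x = f y := by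
  constructor
  · intro h f hf
    have h1 := le_deltaF τ d hf x y
    rw [h, le_zero_iff, ENNReal.ofReal_eq_zero] at h1
    have h2 : |f x - f y| = 0 := le_antisymm h1 (abs_nonneg _)
    have := abs_eq_zero.mp h2
    linarith [sub_eq_zero.mp this]
  · intro h
    refine le_antisymm (iSup₂_le fun f hf => ?_) zero_le
    rw [h f hf]; simp

/-- The setoid identifying points not separated by `Lip1 τ d`. -/
def lipSetoid : Setoid X :=
  ⟨fun x y => ∀ f ∈ Lip1 τ d, f x = f y,
    ⟨fun _ _ _ => rfl, fun h f hf => (h f hf).symm,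
      fun h1 h2 f hf => (h1 f hf).trans (h2 f hf)⟩⟩

/-- The e.m.t.-fication quotient. -/
def EmtQuot : Type u := Quotient (lipSetoid τ d)

/-- The quotient map. -/
def emtMk : X → EmtQuot τ d := Quotient.mk (lipSetoid τ d)

lemma emtMk_surjective : Function.Surjective (emtMk τ d) :=
  fun z => Quotient.exists_rep z

/-- The distance on the quotient. -/
noncomputable def dQuot : EmtQuot τ d → EmtQuot τ d → ℝ≥0∞ :=
  Quotient.lift₂ (deltaF τ d) (by
    intro a₁ b₁ a₂ b₂ h1 h2
    exact iSup_congr fun f => iSup_congr fun hf => by rw [h1 f hf, h2 f hf])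

lemma dQuot_mk (x y : X) : dQuot τ d (emtMk τ d x) (emtMk τ d y) = deltaF τ d x y := rfl

/-- The quotient topology. -/
def tauQuot : TopologicalSpace (EmtQuot τ d) := τ.coinduced (emtMk τ d)

lemma emtMk_continuous : @Continuous X (EmtQuot τ d) τ (tauQuot τ d) (emtMk τ d) :=
  continuous_coinduced_rng

lemma emtMk_short : ContinuousShort τ d (tauQuot τ d) (dQuot τ d) (emtMk τ d) :=
  ⟨emtMk_continuous τ d, fun x y => (dQuot_mk τ d x y).le.trans (deltaF_le τ d x y)⟩

/-- Composing a short map into an arbitrary pre-e.pm.t. space with a `Lip1` function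
of the target yields a `Lip1` function of the source. -/
lemma comp_short_mem_lip1 {Y : Type*} (τY : TopologicalSpace Y) (dY : Y → Y → ℝ≥0∞)
    {φ : X → Y} (hφ : ContinuousShort τ d τY dY φ)
    {h : Y → ℝ} (hh : h ∈ Lip1 τY dY) : h ∘ φ ∈ Lip1 τ d := by
  obtain ⟨C, hC⟩ := hh.2.1
  exact ⟨hh.1.comp hφ.1, ⟨C, fun x => hC (φ x)⟩,
    fun x y => (hh.2.2 (φ x) (φ y)).trans (hφ.2 x y)⟩

/-- Descent of a `Lip1` function to the quotient. -/
noncomputable def liftFun (f : X → ℝ) (hf : f ∈ Lip1 τ d) : EmtQuot τ d → ℝ :=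
  Quotient.lift f (fun _ _ h => h f hf)

lemma liftFun_mk (f : X → ℝ) (hf : f ∈ Lip1 τ d) (x : X) :
    liftFun τ d f hf (emtMk τ d x) = f x := rfl

lemma liftFun_mem (f : X → ℝ) (hf : f ∈ Lip1 τ d) :
    liftFun τ d f hf ∈ Lip1 (tauQuot τ d) (dQuot τ d) := by
  refine ⟨?_, ?_, ?_⟩
  · apply continuous_coinduced_dom.mpr
    exact hf.1
  · obtain ⟨C, hC⟩ := hf.2.1
    refine ⟨C, ?_⟩
    intro z; induction z using Quotient.ind with
    | _ x => exact hC x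
  · intro z w
    induction z using Quotient.ind with
    | _ x =>
      induction w using Quotient.ind with
      | _ y => exact le_deltaF τ d hf x y

lemma dQuot_recover (z w : EmtQuot τ d) :
    dQuot τ d z w = ⨆ g ∈ Lip1 (tauQuot τ d) (dQuot τ d), ENNReal.ofReal |g z - g w| := by
  induction z using Quotient.ind with
  | _ x =>
    induction w using Quotient.ind with
    | _ y =>
      refine le_antisymm ?_ ?_
      · refine iSup₂_le fun f hf => ?_
        have := le_deltaF (tauQuot τ d) (dQuot τ d) (liftFun_mem τ d f hf)
          (emtMk τ d x) (emtMk τ d y)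
        exact this
      · refine iSup₂_le fun g hg => ?_
        have hgc : g ∘ emtMk τ d ∈ Lip1 τ d :=
          comp_short_mem_lip1 τ d (tauQuot τ d) (dQuot τ d) (emtMk_short τ d) hg
        exact le_deltaF τ d hgc x y

end AuxEMT

/-! ### Topology helper lemmas -/

lemma topEq_of_compact_t2 {Z : Type*} {t t' : TopologicalSpace Z}
    (h : t ≤ t') (hc : @CompactSpace Z t) (h2 : @T2Space Z t') : t = t' := by
  refine le_antisymm h ?_
  rw [TopologicalSpace.le_def]
  intro U hU
  have hclosed : @IsClosed Z t Uᶜ := @isClosed_compl_iff Z t U |>.mpr hU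
  have hcomp : @IsCompact Z t Uᶜ := @IsClosed.isCompact Z t Uᶜ hc hclosed
  have hcomp' : @IsCompact Z t' Uᶜ := by
    have hid : @Continuous Z Z t t' id := continuous_id_iff_le.mpr h
    have := @IsCompact.image Z Z t t' Uᶜ id hcomp hid
    rwa [Set.image_id] at this
  have : @IsClosed Z t' Uᶜ := @IsCompact.isClosed Z t' h2 Uᶜ hcomp'
  exact @isClosed_compl_iff Z t' U |>.mp this

lemma t2_of_separating {Z : Type*} (F : Set (Z → ℝ))
    (hsep : ∀ z w : Z, z ≠ w → ∃ g ∈ F, g z ≠ g w) :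
    @T2Space Z (⨅ g ∈ F, TopologicalSpace.induced g inferInstance) := by
  letI t : TopologicalSpace Z := ⨅ g ∈ F, TopologicalSpace.induced g inferInstance
  constructor
  intro z w hzw
  obtain ⟨g, hgF, hg⟩ := hsep z w hzw
  obtain ⟨U, V, hU, hV, hzU, hwV, hUV⟩ := t2_separation hg
  have hle : t ≤ TopologicalSpace.induced g inferInstance :=
    iInf₂_le (f := fun g (_ : g ∈ F) => TopologicalSpace.induced g inferInstance) g hgF
  have hgo : ∀ W : Set ℝ, IsOpen W → @IsOpen Z t (g ⁻¹' W) := by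
    intro W hW
    exact TopologicalSpace.le_def.mp hle _ ⟨W, hW, rfl⟩
  exact ⟨g ⁻¹' U, g ⁻¹' V, hgo U hU, hgo V hV, hzU, hwV, hUV.preimage g⟩

lemma compactSpace_coinduced {X Z : Type*} (t : TopologicalSpace X) (f : X → Z)
    (hs : Function.Surjective f) (hc : @CompactSpace X t) :
    @CompactSpace Z (t.coinduced f) := by
  have hcont : @Continuous X Z t (t.coinduced f) f := continuous_coinduced_rng
  have h2 := @IsCompact.image X Z t (t.coinduced f) Set.univ f (@isCompact_univ X t hc) hcont
  rw [Set.image_univ, Function.Surjective.range_eq hs] at h2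
  exact @CompactSpace.mk Z (t.coinduced f) h2

/-- **E.m.t.-fication of a compact pre-e.pm.t. space.** -/
theorem emt_fication_of_compact {X : Type u} (τ : TopologicalSpace X) (d : X → X → ℝ≥0∞)
    (hd : IsExtPseudoDist d) (hcpt : @CompactSpace X τ) :
    ∃ (Z : Type u) (τZ : TopologicalSpace Z) (dZ : Z → Z → ℝ≥0∞) (c : X → Z),
      IsEMT τZ dZ ∧ @CompactSpace Z τZ ∧
      Function.Surjective c ∧ ContinuousShort τ d τZ dZ c ∧
      (∀ (Y : Type v) (τY : TopologicalSpace Y) (dY : Y → Y → ℝ≥0∞), IsEMT τY dY →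
        ∀ φ : X → Y, ContinuousShort τ d τY dY φ →
          ∃! ψ : Z → Y, ContinuousShort τZ dZ τY dY ψ ∧ ψ ∘ c = φ) ∧
      τZ = TopologicalSpace.coinduced c τ := by
  classical
  set Z := EmtQuot τ d with hZ
  set τZ := tauQuot τ d with hτZ
  set dZ := dQuot τ d with hdZ
  set c := emtMk τ d with hc
  have hsurj : Function.Surjective c := emtMk_surjective τ d
  have hcZ : @CompactSpace Z τZ := compactSpace_coinduced τ c hsurj hcpt
  -- extended distance
  have hdist : IsExtDist dZ := by
    refine ⟨?_, ?_, ?_⟩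
    · intro z w
      induction z using Quotient.ind with
      | _ x =>
        induction w using Quotient.ind with
        | _ y =>
          exact ⟨fun h => Quotient.sound ((deltaF_eq_zero_iff τ d x y).mp h),
            fun h => (deltaF_eq_zero_iff τ d x y).mpr (Quotient.exact h)⟩
    · intro z w
      induction z using Quotient.ind with
      | _ x =>
        induction w using Quotient.ind with
        | _ y => exact deltaF_symm τ d x y
    · intro z w v
      induction z using Quotient.ind with
      | _ x =>
        induction w using Quotient.ind with
        | _ y =>
          induction v using Quotient.ind with
          | _ u => exact deltaF_triangle τ d x y u
  -- separation
  have hsep : ∀ z w : Z, z ≠ w → ∃ g ∈ Lip1 τZ dZ, g z ≠ g w := by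
    intro z w hzw
    induction z using Quotient.ind with
    | _ x =>
      induction w using Quotient.ind with
      | _ y =>
        have hnr : ¬ (∀ f ∈ Lip1 τ d, f x = f y) := fun h => hzw (Quotient.sound h)
        push_neg at hnr
        obtain ⟨f, hf, hfxy⟩ := hnr
        exact ⟨liftFun τ d f hf, liftFun_mem τ d f hf, hfxy⟩
  -- the initial topology of Lip1 τZ dZ
  have hle : τZ ≤ ⨅ g ∈ Lip1 τZ dZ, TopologicalSpace.induced g inferInstance :=
    le_iInf₂ fun g hg => continuous_iff_le_induced.mp hg.1
  have htop : τZ = ⨅ g ∈ Lip1 τZ dZ, TopologicalSpace.induced g inferInstance :=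
    topEq_of_compact_t2 hle hcZ (t2_of_separating _ hsep)
  have hEMT : IsEMT τZ dZ := ⟨hdist, htop, dQuot_recover τ d⟩
  refine ⟨Z, τZ, dZ, c, hEMT, hcZ, hsurj, emtMk_short τ d, ?_, rfl⟩
  -- universal property
  intro Y τY dY hY φ hφ
  have hconst : ∀ a b : X, (lipSetoid τ d).r a b → φ a = φ b := by
    intro a b hab
    have hzero : dY (φ a) (φ b) = 0 := by
      rw [hY.2.2]
      refine le_antisymm (iSup₂_le fun h hh => ?_) zero_le
      have : (h ∘ φ) a = (h ∘ φ) b :=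
        hab (h ∘ φ) (comp_short_mem_lip1 τ d τY dY hφ hh)
      simp only [Function.comp_apply] at this
      rw [this]; simp
    exact (hY.1.eq_zero_iff _ _).mp hzero
  refine ⟨Quotient.lift φ hconst, ⟨⟨?_, ?_⟩, rfl⟩, ?_⟩
  · rw [hτZ]
    show @Continuous Z Y (tauQuot τ d) τY _
    apply continuous_coinduced_dom.mpr
    exact hφ.1
  · intro z w
    induction z using Quotient.ind with
    | _ x =>
      induction w using Quotient.ind with
      | _ y =>
        show dY (φ x) (φ y) ≤ dQuot τ d (emtMk τ d x) (emtMk τ d y)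
        rw [dQuot_mk, hY.2.2]
        refine iSup₂_le fun h hh => ?_
        exact le_deltaF τ d (comp_short_mem_lip1 τ d τY dY hφ hh) x y
  · rintro ψ ⟨-, hcomp⟩
    funext z
    induction z using Quotient.ind with
    | _ x => exact congrFun hcomp x
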